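/- Machine steady-state electrical equations. Consider a synchronous machine and fix ω0 ∈ ℝ. For i = (i_s, i_f, i_d, i_q) ∈ ℝ² × ℝ × ℝ × ℝ, v ∈ ℝ², and v_f ∈ ℝ, the equation (R + ω0·𝒿·L(θ))·i = (v, v_f, 0, 0) holds if and only if: i_d = 0, i_q = 0, v_f = r_f·i_f, and ω0·l_sf·i_f·(j·r(θ)) = v − (r_s·I₂ + ω0·j·L_s(θ))·i_s. -/

import Mathlib

noncomputable section
open Matrix

/-- Vectors in ℝ². -/
abbrev V2 : Type := Fin 2 → ℝ
/-- 2×2 real matrices. -/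
abbrev M2 : Type := Matrix (Fin 2) (Fin 2) ℝ

/-- The 90° rotation matrix `j`. -/
def j2 : M2 := !![0, -1; 1, 0]

/-- The rotation matrix `R(θ)`. -/
def Rot (θ : ℝ) : M2 := !![Real.cos θ, -Real.sin θ; Real.sin θ, Real.cos θ]

/-- The unit vector `r(θ) = (cos θ, sin θ)`. -/
def rvec (θ : ℝ) : V2 := ![Real.cos θ, Real.sin θ]

/-- The Euclidean norm on ℝ². -/
def enorm2 (w : V2) : ℝ := Real.sqrt (w 0 ^ 2 + w 1 ^ 2)
/-- Index type for the 5 machine windings: 2 stator + 3 rotor (f, d, q). -/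
abbrev I5 : Type := Fin 2 ⊕ Fin 3
/-- Vectors in ℝ⁵ (machine currents/voltages). -/
abbrev V5 : Type := I5 → ℝ

/-- The 5×5 matrix 𝒿 = diag(j, 0₃ₓ₃). -/
def jj : Matrix I5 I5 ℝ := Matrix.fromBlocks j2 0 0 0

/-- Parameters of a synchronous machine. -/
structure Machine where
  /-- stator winding resistance -/
  rs : ℝ
  /-- excitation winding resistance -/
  rf : ℝ
  /-- d-axis damper winding resistance -/
  rd : ℝ
  /-- q-axis damper winding resistance -/
  rq : ℝ
  /-- stator winding inductance -/
  ls : ℝ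
  /-- rotor saliency -/
  lsa : ℝ
  /-- excitation winding inductance -/
  lf : ℝ
  /-- d-axis damper winding inductance -/
  ld : ℝ
  /-- q-axis damper winding inductance -/
  lq : ℝ
  /-- mutual inductance of excitation and damper winding -/
  lfd : ℝ
  /-- stator–excitation mutual inductance -/
  lsf : ℝ
  /-- stator–d-damper mutual inductance -/
  lsd : ℝ
  /-- stator–q-damper mutual inductance -/
  lsq : ℝ
  /-- rotor inertia -/
  m : ℝ
  /-- rotor damping -/
  d : ℝ
  rs_pos : 0 < rs
  rf_pos : 0 < rf
  rd_pos : 0 < rd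
  rq_pos : 0 < rq
  ls_pos : 0 < ls
  lsa_nonneg : 0 ≤ lsa
  lf_pos : 0 < lf
  ld_pos : 0 < ld
  lq_pos : 0 < lq
  lfd_pos : 0 < lfd
  lsf_pos : 0 < lsf
  lsd_pos : 0 < lsd
  lsq_pos : 0 < lsq
  m_pos : 0 < m
  d_pos : 0 < d

namespace Machine

/-- Stator inductance matrix L_s(θ). -/
def Ls (mc : Machine) (θ : ℝ) : M2 :=
  mc.ls • (1 : M2) + Rot (2 * θ) * !![mc.lsa, 0; 0, -mc.lsa]

/-- Mutual inductance matrix L_m(θ). -/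
def Lm (mc : Machine) (θ : ℝ) : Matrix (Fin 2) (Fin 3) ℝ :=
  Rot θ * !![mc.lsf, mc.lsd, 0; 0, 0, -mc.lsq]

/-- Rotor inductance matrix L_r. -/
def Lr (mc : Machine) : Matrix (Fin 3) (Fin 3) ℝ :=
  !![mc.lf, mc.lfd, 0; mc.lfd, mc.ld, 0; 0, 0, mc.lq]

/-- The 5×5 machine inductance matrix L(θ). -/
def Lmat (mc : Machine) (θ : ℝ) : Matrix I5 I5 ℝ :=
  Matrix.fromBlocks (mc.Ls θ) (mc.Lm θ) (mc.Lm θ)ᵀ mc.Lr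

/-- The 5×5 machine resistance matrix R = diag(r_s I₂, r_f, r_d, r_q). -/
def Rmat (mc : Machine) : Matrix I5 I5 ℝ :=
  Matrix.fromBlocks (mc.rs • (1 : M2)) 0 0 (Matrix.diagonal ![mc.rf, mc.rd, mc.rq])

/-- Electrical torque τ_e = ½ iᵀ(L(θ)𝒿 + 𝒿ᵀL(θ))i. -/
def torque (mc : Machine) (θ : ℝ) (i : V5) : ℝ :=
  (1 / 2) * (i ⬝ᵥ ((mc.Lmat θ * jj + jjᵀ * mc.Lmat θ) *ᵥ i))

/-- Induced voltage v_ind = ω(L(θ)𝒿ᵀ + 𝒿L(θ))i. -/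
def vind (mc : Machine) (ω θ : ℝ) (i : V5) : V5 :=
  ω • ((mc.Lmat θ * jjᵀ + jj * mc.Lmat θ) *ᵥ i)

/-- Stator impedance Z_s(θ) = r_s I₂ + ω₀ j L_s(θ). -/
def Zs (mc : Machine) (ω0 θ : ℝ) : M2 :=
  mc.rs • (1 : M2) + ω0 • (j2 * mc.Ls θ)

/-- The open-circuit stator voltage error ν(θ) = v − Z_s(θ) i_s. -/
def nu (mc : Machine) (ω0 θ : ℝ) (v is : V2) : V2 :=
  v - mc.Zs ω0 θ *ᵥ is

end Machine

/-- Machine steady-state electrical equations: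
(R + ω₀ 𝒿 L(θ)) i = (v, v_f, 0, 0) iff i_d = 0, i_q = 0, v_f = r_f i_f, and
ω₀ l_sf i_f (j r(θ)) = v − (r_s I₂ + ω₀ j L_s(θ)) i_s. -/
theorem machine_steady_state_equations (mc : Machine) (ω0 θ : ℝ)
    (is : V2) (i_f i_d i_q : ℝ) (v : V2) (v_f : ℝ) :
    (mc.Rmat + ω0 • (jj * mc.Lmat θ)) *ᵥ Sum.elim is ![i_f, i_d, i_q]
        = Sum.elim v ![v_f, 0, 0]
      ↔ (i_d = 0 ∧ i_q = 0 ∧ v_f = mc.rf * i_f ∧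
          (ω0 * mc.lsf * i_f) • (j2 *ᵥ rvec θ)
            = v - (mc.rs • (1 : M2) + ω0 • (j2 * mc.Ls θ)) *ᵥ is) := by
  rw [funext_iff, Sum.forall]
  simp only [Fin.forall_fin_two, Fin.forall_fin_succ_pi]
  simp [Machine.Rmat, Machine.Lmat, Machine.Ls, Machine.Lm, Machine.Lr, jj, j2, Rot, rvec,
    Matrix.mulVec, dotProduct, Fintype.sum_sum_type, Fin.sum_univ_two, Fin.sum_univ_three,
    Matrix.mul_apply, Matrix.one_apply, funext_iff, Fin.forall_fin_two,
    Matrix.fromBlocks, Matrix.fromRows, Matrix.fromCols, Matrix.diagonal,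
    Matrix.vecMul, Fin.forall_fin_succ, Matrix.smul_apply, smul_eq_mul]
  constructor
  · rintro ⟨⟨h1, h2⟩, h3, h4, h5⟩
    obtain rfl : i_d = 0 := h4.resolve_left mc.rd_pos.ne'
    obtain rfl : i_q = 0 := h5.resolve_left mc.rq_pos.ne'
    exact ⟨rfl, rfl, h3.symm, by have e : v 0 = vecHead v := rfl; linear_combination h1 + e, by have e : v 1 = vecHead (vecTail v) := rfl; linear_combination h2 + e⟩
  · rintro ⟨rfl, rfl, h3, h4, h5⟩
    exact ⟨⟨by have e : vecHead v = v 0 := rfl; linear_combination h4 + e, by have e : vecHead (vecTail v) = v 1 := rfl; linear_combination h5 + e⟩, h3.symm, Or.inr rfl, Or.inr rfl⟩
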